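/- arXiv:2201.03927 — 7 statements merged into one kernel-verified Lean document; each statement's English description precedes it below -/
import Mathlib

section
/- Let R be a commutative noetherian ring and let S and T be classes of R-modules, each containing the zero module and closed under extensions. Then the extension class ST is closed under extensions if and only if TS ⊆ ST. -/
universe u

open CategoryTheory Opposite

noncomputable section

variable (R : Type u) [CommRing R]

/-- A class of `R`-modules, modeled as a set of objects of `ModuleCat R`. -/
abbrev ModClass (R : Type u) [CommRing R] := Set (ModuleCat.{u} R)

/-- `S` is closed under isomorphisms of `R`-modules. -/
def IsoClosed (S : ModClass R) : Prop :=
  ∀ (M N : ModuleCat.{u} R), (↥M ≃ₗ[R] ↥N) → M ∈ S → N ∈ S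

/-- `S` contains a zero module. -/
def ContainsZero (S : ModClass R) : Prop :=
  ModuleCat.of R PUnit ∈ S

/-- The extension class `ST`: all modules possessing a submodule belonging to `S`
with quotient belonging to `T`. -/
def ExtCls (S T : ModClass R) : ModClass R :=
  {M | ∃ L : Submodule R ↥M, ModuleCat.of R L ∈ S ∧ ModuleCat.of R (↥M ⧸ L) ∈ T}

/-- `S` is closed under extensions. -/
def ClosedUnderExt (S : ModClass R) : Prop :=
  ∀ (M : ModuleCat.{u} R) (L : Submodule R ↥M),
    ModuleCat.of R L ∈ S → ModuleCat.of R (↥M ⧸ L) ∈ S → M ∈ S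

/-- `S` is closed under submodules. -/
def ClosedUnderSub (S : ModClass R) : Prop :=
  ∀ (M : ModuleCat.{u} R) (L : Submodule R ↥M), M ∈ S → ModuleCat.of R L ∈ S

/-- `S` is closed under quotient modules. -/
def ClosedUnderQuot (S : ModClass R) : Prop :=
  ∀ (M : ModuleCat.{u} R) (L : Submodule R ↥M), M ∈ S → ModuleCat.of R (↥M ⧸ L) ∈ S

/-- `S` is a Serre class: it is closed under isomorphisms, contains the zero module, and
is closed under submodules, quotient modules, and extensions. -/
structure IsSerre (S : ModClass R) : Prop where
  isoClosed : IsoClosed R S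
  zero_mem : ContainsZero R S
  sub : ClosedUnderSub R S
  quot : ClosedUnderQuot R S
  ext : ClosedUnderExt R S

/-- The class `N` of finitely generated `R`-modules. -/
def FGCls : ModClass R := {M | Module.Finite R ↥M}

/-- The class `F` of `R`-modules with finite support. -/
def FinSuppCls : ModClass R := {M | (Module.support R ↥M).Finite}

/-- The class of all quotients of members of `S`. -/
def QuotCls (S : ModClass R) : ModClass R :=
  {M | ∃ (X : ModuleCat.{u} R) (f : ↥X →ₗ[R] ↥M), X ∈ S ∧ Function.Surjective f}

/-- `Γ_a(M) = M`: every element of `M` is annihilated by some power of `a`. -/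
def IsTorsionCls (a : Ideal R) (M : Type u) [AddCommGroup M] [Module R M] : Prop :=
  ∀ x : M, ∃ n : ℕ, ∀ r ∈ a ^ n, r • x = 0

/-- The class `S` satisfies Melkersson's condition `C_a`: any module `M` with `Γ_a(M) = M`
and `(0 :_M a) ∈ S` belongs to `S`. -/
def SatisfiesC (a : Ideal R) (S : ModClass R) : Prop :=
  ∀ M : ModuleCat.{u} R, IsTorsionCls R a ↥M →
    ModuleCat.of R (Submodule.torsionBySet R ↥M (a : Set R)) ∈ S → M ∈ S

/-- A module is weakly Laskerian if every quotient has finitely many associated primes. -/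
def IsWeaklyLaskerian (M : Type u) [AddCommGroup M] [Module R M] : Prop :=
  ∀ K : Submodule R M, (associatedPrimes R (M ⧸ K)).Finite

/-- A module is finitely weakly Laskerian if the quotient by every finitely generated submodule
has finitely many associated primes. -/
def IsFWLaskerian (M : Type u) [AddCommGroup M] [Module R M] : Prop :=
  ∀ K : Submodule R M, K.FG → (associatedPrimes R (M ⧸ K)).Finite

/-- A module is minimax if it has a finitely generated submodule with artinian quotient. -/
def IsMinimax (M : Type u) [AddCommGroup M] [Module R M] : Prop :=
  ∃ N : Submodule R M, N.FG ∧ IsArtinian R (M ⧸ N)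

/-- The `a`-torsion submodule `Γ_a(M)` of a module `M`. -/
def torsionGamma (a : Ideal R) (M : Type u) [AddCommGroup M] [Module R M] : Submodule R M :=
  ⨆ n : ℕ, Submodule.torsionBySet R M ((a ^ n : Ideal R) : Set R)

/-- `Ext_R^i(R/a, M)` as an object of `ModuleCat R`. -/
def extQuot (a : Ideal R) (i : ℕ) (M : ModuleCat.{u} R) : ModuleCat.{u} R :=
  ((Ext R (ModuleCat.{u} R) i).obj (op (ModuleCat.of R (R ⧸ a)))).obj M

/-- A module `X` is `a`-cofinite if `Supp X ⊆ V(a)` and all modules `Ext_R^i(R/a, X)` are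
finitely generated. -/
def IsCofinite (a : Ideal R) (M : ModuleCat.{u} R) : Prop :=
  Module.support R ↥M ⊆ PrimeSpectrum.zeroLocus (a : Set R) ∧
    ∀ i : ℕ, Module.Finite R ↥(extQuot R a i M)

/-- The ideal `a` has height at least one: every prime containing `a` has height at least one. -/
def HeightGEOne (a : Ideal R) : Prop :=
  ∀ p : PrimeSpectrum R, a ≤ p.asIdeal → 1 ≤ Order.height p

end

namespace ExtClsProof

variable {R : Type u} [CommRing R]

/-- Any two subsingleton modules are linearly equivalent. -/
def subsingletonEquiv (A B : Type*) [AddCommGroup A] [Module R A] [AddCommGroup B] [Module R B]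
    [Subsingleton A] [Subsingleton B] : A ≃ₗ[R] B where
  toFun _ := 0
  invFun _ := 0
  map_add' _ _ := Subsingleton.elim _ _
  map_smul' _ _ := Subsingleton.elim _ _
  left_inv _ := Subsingleton.elim _ _
  right_inv _ := Subsingleton.elim _ _

variable {M : Type u} [AddCommGroup M] [Module R M]

/-- Second isomorphism style equivalence: `q / (p ∩ q) ≃ (image of q in M/p)`. -/
noncomputable def quotCompEquiv (p q : Submodule R M) :
    (↥q ⧸ p.comap q.subtype) ≃ₗ[R] ↥(q.map p.mkQ) :=
  (Submodule.quotEquivOfEq _ _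
      (by rw [LinearMap.ker_comp, Submodule.ker_mkQ])).trans
    ((p.mkQ.comp q.subtype).quotKerEquivRange.trans
      (LinearEquiv.ofEq _ _
        (by rw [LinearMap.range_comp, Submodule.range_subtype])))

/-- For `b ≤ c`, the quotient of `b`-inside-`c` by `a`-inside-`c` agrees with `b / (a ∩ b)`. -/
noncomputable def quotRestrictEquiv (a b c : Submodule R M) (hbc : b ≤ c) :
    (↥(b.comap c.subtype) ⧸ ((a.comap c.subtype).comap (b.comap c.subtype).subtype))
      ≃ₗ[R] (↥b ⧸ a.comap b.subtype) :=
  Submodule.Quotient.equiv _ _ (Submodule.comapSubtypeEquivOfLe hbc) (by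
    ext x
    rw [Submodule.mem_map]
    constructor
    · rintro ⟨y, hy, rfl⟩
      simpa using hy
    · intro hx
      exact ⟨⟨⟨x, hbc x.2⟩, x.2⟩, hx, rfl⟩)

end ExtClsProof

/-- For classes `S` and `T` of modules over a commutative noetherian ring,
each containing the zero module and closed under extensions (and under isomorphisms),
the extension class `ST` is closed under extensions iff `TS ⊆ ST`. -/
theorem extCls_closedUnderExt_iff (R : Type u) [CommRing R] [IsNoetherianRing R]
    (S T : ModClass R)
    (hSiso : IsoClosed R S) (hTiso : IsoClosed R T)
    (hS0 : ContainsZero R S) (hT0 : ContainsZero R T)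
    (hSext : ClosedUnderExt R S) (hText : ClosedUnderExt R T) :
    ClosedUnderExt R (ExtCls R S T) ↔ ExtCls R T S ⊆ ExtCls R S T := by
  constructor
  · intro hclosed M hM
    obtain ⟨L, hLT, hLS⟩ := hM
    refine hclosed M L ⟨⊥, ?_, ?_⟩ ⟨⊤, ?_, ?_⟩
    · exact hSiso (ModuleCat.of R PUnit) _ (ExtClsProof.subsingletonEquiv _ _) hS0
    · exact hTiso _ _ ((Submodule.quotEquivOfEqBot ⊥ rfl).symm) hLT
    · exact hSiso _ _ (Submodule.topEquiv.symm) hLS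
    · haveI : Subsingleton ((↥(ModuleCat.of R (↥M ⧸ L)) ⧸ (⊤ : Submodule R _))) :=
        Submodule.Quotient.subsingleton_iff.mpr rfl
      exact hTiso (ModuleCat.of R PUnit) _ (ExtClsProof.subsingletonEquiv _ _) hT0
  · intro hsub M L hL hQ
    obtain ⟨L₁, hL₁S, hL₁T⟩ := hL
    obtain ⟨P, hPS, hPT⟩ := hQ
    set A : Submodule R ↥M := L₁.map L.subtype with hAdef
    set K : Submodule R ↥M := P.comap L.mkQ with hKdef
    have hAL : A ≤ L := Submodule.map_subtype_le L L₁
    have hLK : L ≤ K := by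
      intro x hx
      show L.mkQ x ∈ P
      rw [show L.mkQ x = 0 from (Submodule.Quotient.mk_eq_zero L).mpr hx]
      exact P.zero_mem
    have hAK : A ≤ K := le_trans hAL hLK
    have hAcomapL : A.comap L.subtype = L₁ :=
      Submodule.comap_map_eq_of_injective L.injective_subtype L₁
    have hPmap : K.map L.mkQ = P :=
      Submodule.map_comap_eq_of_surjective L.mkQ_surjective P
    set A' : Submodule R ↥K := A.comap K.subtype with hA'def
    set L' : Submodule R ↥K := L.comap K.subtype with hL'def
    have hA'L' : A' ≤ L' := Submodule.comap_mono hAL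
    have hXTS : ModuleCat.of R (↥K ⧸ A') ∈ ExtCls R T S := by
      refine ⟨L'.map A'.mkQ, ?_, ?_⟩
      · refine hTiso (ModuleCat.of R (↥L ⧸ L₁)) _ ?_ hL₁T
        exact (Submodule.quotEquivOfEq L₁ (A.comap L.subtype) hAcomapL.symm).trans
          ((ExtClsProof.quotRestrictEquiv A L K hLK).symm.trans
            (ExtClsProof.quotCompEquiv A' L'))
      · refine hSiso (ModuleCat.of R ↥P) _ ?_ hPS
        exact (LinearEquiv.ofEq P (K.map L.mkQ) hPmap.symm).trans
          ((ExtClsProof.quotCompEquiv L K).symm.trans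
            (Submodule.quotientQuotientEquivQuotient A' L' hA'L').symm)
    obtain ⟨Q, hQS, hQT⟩ := hsub hXTS
    set Q' : Submodule R ↥K := Q.comap A'.mkQ with hQ'def
    have hA'Q' : A' ≤ Q' := by
      intro x hx
      show A'.mkQ x ∈ Q
      rw [show A'.mkQ x = 0 from (Submodule.Quotient.mk_eq_zero A').mpr hx]
      exact Q.zero_mem
    have hQmap : Q'.map A'.mkQ = Q :=
      Submodule.map_comap_eq_of_surjective A'.mkQ_surjective Q
    set B : Submodule R ↥M := Q'.map K.subtype with hBdef
    have hBK : B ≤ K := Submodule.map_subtype_le K Q'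
    have hB' : B.comap K.subtype = Q' :=
      Submodule.comap_map_eq_of_injective K.injective_subtype Q'
    have hAB : A ≤ B := by
      intro x hx
      exact ⟨⟨x, hAK hx⟩, hA'Q' (show (⟨x, hAK hx⟩ : ↥K) ∈ A' from hx), rfl⟩
    refine ⟨B, ?_, ?_⟩
    · refine hSext (ModuleCat.of R ↥B) (A.comap B.subtype) ?_ ?_
      · refine hSiso (ModuleCat.of R ↥L₁) _ ?_ hL₁S
        exact (Submodule.equivMapOfInjective L.subtype L.injective_subtype L₁).trans
          (Submodule.comapSubtypeEquivOfLe hAB).symm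
      · refine hSiso (ModuleCat.of R ↥Q) _ ?_ hQS
        have e := ExtClsProof.quotRestrictEquiv A B K hBK
        rw [hB'] at e
        exact (LinearEquiv.ofEq Q (Q'.map A'.mkQ) hQmap.symm).trans
          ((ExtClsProof.quotCompEquiv A' Q').symm.trans e)
    · refine hText (ModuleCat.of R (↥M ⧸ B)) (K.map B.mkQ) ?_ ?_
      · refine hTiso (ModuleCat.of R ((↥K ⧸ A') ⧸ Q)) _ ?_ hQT
        exact (Submodule.quotEquivOfEq Q (Q'.map A'.mkQ) hQmap.symm).trans
          ((Submodule.quotientQuotientEquivQuotient A' Q' hA'Q').trans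
            ((Submodule.quotEquivOfEq Q' (B.comap K.subtype) hB'.symm).trans
              (ExtClsProof.quotCompEquiv B K)))
      · refine hTiso (ModuleCat.of R ((↥M ⧸ L) ⧸ P)) _ ?_ hPT
        exact (Submodule.quotEquivOfEq P (K.map L.mkQ) hPmap.symm).trans
          ((Submodule.quotientQuotientEquivQuotient L K hLK).trans
            (Submodule.quotientQuotientEquivQuotient B K hBK).symm)
end

section
/- Let R be a commutative noetherian ring, let N denote the class of finitely generated R-modules, and let S be a class of R-modules containing the zero module. Then SN ⊆ N(S_quot), where S_quot denotes the class of all quotient modules of members of S. In particular, if S is closed under quotient modules and extensions, then the extension class NS is closed under quotient modules and extensions. -/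
universe u

open CategoryTheory Opposite

/-- Auxiliary: a finitely generated submodule of the target of a surjection lifts to a
finitely generated submodule of the source. -/
lemma aux_exists_fg_map_eq {R M N : Type u} [CommRing R] [AddCommGroup M] [Module R M]
    [AddCommGroup N] [Module R N] (π : M →ₗ[R] N) (hπ : Function.Surjective π)
    (t : Submodule R N) (ht : t.FG) : ∃ s : Submodule R M, s.FG ∧ s.map π = t := by
  obtain ⟨u, hu⟩ := ht
  refine ⟨Submodule.span R (Function.surjInv hπ '' ↑u),
    Submodule.fg_span (u.finite_toSet.image _), ?_⟩
  rw [Submodule.map_span, Set.image_image]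
  simp only [Function.surjInv_eq hπ, Set.image_id', hu]

/-- Auxiliary: a class closed under isomorphisms and quotients is closed under surjective
images. -/
lemma aux_mem_of_surj {R : Type u} [CommRing R] (S : ModClass R) (hiso : IsoClosed R S)
    (hquot : ClosedUnderQuot R S) {X Y : ModuleCat.{u} R} (hX : X ∈ S)
    (f : ↥X →ₗ[R] ↥Y) (hf : Function.Surjective f) : Y ∈ S :=
  hiso (ModuleCat.of R (↥X ⧸ LinearMap.ker f)) Y (f.quotKerEquivOfSurjective hf)
    (hquot X (LinearMap.ker f) hX)

/-- `SN ⊆ N(S_quot)`; in particular, if `S` is closed under quotients and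
extensions, then `NS` is closed under quotients and extensions. -/
theorem extCls_fg_subset_and_closure (R : Type u) [CommRing R] [IsNoetherianRing R]
    (S : ModClass R) (hSiso : IsoClosed R S) (hS0 : ContainsZero R S) :
    ExtCls R S (FGCls R) ⊆ ExtCls R (FGCls R) (QuotCls R S) ∧
    (ClosedUnderQuot R S → ClosedUnderExt R S →
      ClosedUnderQuot R (ExtCls R (FGCls R) S) ∧ ClosedUnderExt R (ExtCls R (FGCls R) S)) := by
  constructor
  · -- SN ⊆ N(S_quot)
    rintro M ⟨L, hL, hfin⟩
    have hfin' : Module.Finite R (↥M ⧸ L) := hfin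
    obtain ⟨K, hKfg, hKmap⟩ := aux_exists_fg_map_eq L.mkQ L.mkQ_surjective ⊤
      (Module.finite_def.mp hfin')
    have hsup : K ⊔ L = ⊤ := by
      rw [eq_top_iff]
      intro m _
      obtain ⟨k, hk, hkm⟩ : ∃ k ∈ K, L.mkQ k = L.mkQ m := by
        have : L.mkQ m ∈ K.map L.mkQ := by rw [hKmap]; trivial
        obtain ⟨k, hk, hkeq⟩ := this
        exact ⟨k, hk, hkeq⟩
      have hmk : m - k ∈ L := by
        have h2 := hkm.symm
        rwa [Submodule.mkQ_apply, Submodule.mkQ_apply, Submodule.Quotient.eq] at h2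
      have hme : m = k + (m - k) := by abel
      rw [hme]
      exact Submodule.add_mem_sup hk hmk
    refine ⟨K, Module.Finite.iff_fg.mpr hKfg, ModuleCat.of R L, K.mkQ.comp L.subtype, hL, ?_⟩
    intro y
    obtain ⟨m, rfl⟩ := K.mkQ_surjective y
    have hm : m ∈ K ⊔ L := by rw [hsup]; trivial
    obtain ⟨k, hk, l, hl, rfl⟩ := Submodule.mem_sup.mp hm
    refine ⟨⟨l, hl⟩, ?_⟩
    have : K.mkQ k = 0 := (Submodule.Quotient.mk_eq_zero K).mpr hk
    show K.mkQ l = K.mkQ (k + l)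
    rw [map_add, this, zero_add]
  · intro hSq hSe
    constructor
    · -- NS closed under quotients
      rintro M L ⟨K, hKfin, hQ⟩
      refine ⟨K.map L.mkQ,
        Module.Finite.iff_fg.mpr ((Module.Finite.iff_fg.mp hKfin).map L.mkQ), ?_⟩
      have hker : K ≤ LinearMap.ker ((K.map L.mkQ).mkQ.comp L.mkQ) := by
        intro x hx
        simp only [LinearMap.mem_ker, LinearMap.comp_apply]
        exact (Submodule.Quotient.mk_eq_zero _).mpr ⟨x, hx, rfl⟩
      exact aux_mem_of_surj S hSiso hSq hQ
        (Submodule.liftQ K ((K.map L.mkQ).mkQ.comp L.mkQ) hker)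
        (fun y => by
          obtain ⟨z, rfl⟩ := (K.map L.mkQ).mkQ_surjective y
          obtain ⟨m, rfl⟩ := L.mkQ_surjective z
          exact ⟨K.mkQ m, rfl⟩)
    · -- NS closed under extensions
      rintro M L ⟨K₁, hK₁fin, hK₁Q⟩ ⟨K₂', hK₂fin, hK₂Q⟩
      obtain ⟨K₂, hK₂fg, hK₂map⟩ := aux_exists_fg_map_eq L.mkQ L.mkQ_surjective K₂'
        (Module.Finite.iff_fg.mp hK₂fin)
      set K : Submodule R ↥M := K₁.map L.subtype ⊔ K₂ with hKdef
      set P : Submodule R ↥M := L ⊔ K₂ with hPdef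
      have hK₁L : K₁.map L.subtype ≤ L := Submodule.map_subtype_le L K₁
      have hKP : K ≤ P := sup_le (hK₁L.trans le_sup_left) le_sup_right
      have hK₂K : K₂ ≤ K := le_sup_right
      refine ⟨K, Module.Finite.iff_fg.mpr
        (Submodule.FG.sup ((Module.Finite.iff_fg.mp hK₁fin).map L.subtype) hK₂fg), ?_⟩
      apply hSe (ModuleCat.of R (↥M ⧸ K)) (P.map K.mkQ)
      · -- P.map K.mkQ ∈ S : surjective image of L ⧸ K₁
        set φ : ↥L →ₗ[R] ↥(P.map K.mkQ) :=
          LinearMap.codRestrict (P.map K.mkQ) (K.mkQ.comp L.subtype)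
            (fun x => ⟨(x : ↥M), Submodule.mem_sup_left x.2, rfl⟩) with hφdef
        have hker : K₁ ≤ LinearMap.ker φ := by
          intro x hx
          have hxK : L.subtype x ∈ K := Submodule.mem_sup_left ⟨x, hx, rfl⟩
          apply Subtype.ext
          show K.mkQ (L.subtype x) = 0
          exact (Submodule.Quotient.mk_eq_zero K).mpr hxK
        refine aux_mem_of_surj S hSiso hSq hK₁Q (Submodule.liftQ K₁ φ hker) ?_
        intro y
        obtain ⟨p, hp, hpy⟩ := y.2
        obtain ⟨l, hl, k, hk, rfl⟩ := Submodule.mem_sup.mp hp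
        refine ⟨K₁.mkQ ⟨l, hl⟩, ?_⟩
        apply Subtype.ext
        have hk0 : K.mkQ k = 0 := (Submodule.Quotient.mk_eq_zero K).mpr (hK₂K hk)
        calc (((Submodule.liftQ K₁ φ hker) (K₁.mkQ ⟨l, hl⟩) : ↥(P.map K.mkQ)) :
              ↥M ⧸ K) = K.mkQ l := rfl
          _ = K.mkQ (l + k) := by rw [map_add, hk0, add_zero]
          _ = y.1 := hpy
      · -- (M ⧸ K) ⧸ (P.map K.mkQ) ∈ S : surjective image of (M ⧸ L) ⧸ K₂'
        set g : ↥M →ₗ[R] (↥(ModuleCat.of R (↥M ⧸ K)) ⧸ P.map K.mkQ) :=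
          (P.map K.mkQ).mkQ.comp K.mkQ with hgdef
        have hgL : L ≤ LinearMap.ker g := by
          intro x hx
          simp only [hgdef, LinearMap.mem_ker, LinearMap.comp_apply]
          exact (Submodule.Quotient.mk_eq_zero _).mpr ⟨x, Submodule.mem_sup_left hx, rfl⟩
        set g₁ : (↥M ⧸ L) →ₗ[R] (↥(ModuleCat.of R (↥M ⧸ K)) ⧸ P.map K.mkQ) :=
          Submodule.liftQ L g hgL with hg₁def
        have hgK₂' : K₂' ≤ LinearMap.ker g₁ := by
          rw [← hK₂map]
          rintro _ ⟨x, hx, rfl⟩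
          show g x = 0
          exact (Submodule.Quotient.mk_eq_zero _).mpr ⟨x, Submodule.mem_sup_right hx, rfl⟩
        refine aux_mem_of_surj S hSiso hSq hK₂Q (Submodule.liftQ K₂' g₁ hgK₂') ?_
        intro y
        obtain ⟨z, rfl⟩ := (P.map K.mkQ).mkQ_surjective y
        obtain ⟨m, rfl⟩ := K.mkQ_surjective z
        exact ⟨K₂'.mkQ (L.mkQ m), rfl⟩
end

section
/- Let R be a commutative noetherian ring and let S be a class of R-modules that is closed under submodules, extensions, and directed unions of submodules (i.e., if a module is the union of a directed family of submodules each belonging to S, then it belongs to S). Then S satisfies condition C_a for every ideal a of R. -/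
universe u

open CategoryTheory Opposite

section Aux
variable {R : Type u} [CommRing R] {S : ModClass R}

theorem memS_of_injective (hiso : IsoClosed R S) (hsub : ClosedUnderSub R S)
    (X P : ModuleCat.{u} R) (f : ↥X →ₗ[R] ↥P) (hf : Function.Injective f) (hP : P ∈ S) :
    X ∈ S :=
  hiso (ModuleCat.of R (LinearMap.range f)) X (LinearEquiv.ofInjective f hf).symm
    (hsub P (LinearMap.range f) hP)

theorem memS_of_ker (hiso : IsoClosed R S) (hsub : ClosedUnderSub R S)
    (hext : ClosedUnderExt R S)
    (X P : ModuleCat.{u} R) (f : ↥X →ₗ[R] ↥P) (hP : P ∈ S)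
    (hker : ModuleCat.of R (LinearMap.ker f) ∈ S) : X ∈ S :=
  hext X (LinearMap.ker f) hker
    (hiso (ModuleCat.of R (LinearMap.range f)) (ModuleCat.of R (↥X ⧸ LinearMap.ker f))
      f.quotKerEquivRange.symm (hsub P _ hP))

theorem memS_pi (hiso : IsoClosed R S) (hsub : ClosedUnderSub R S) (hext : ClosedUnderExt R S)
    (P : ModuleCat.{u} R) (hP : P ∈ S) (m : ℕ) : ModuleCat.of R (Fin m → ↥P) ∈ S := by
  induction m with
  | zero =>
    exact memS_of_injective hiso hsub _ P 0 (fun x y _ => funext fun i => i.elim0) hP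
  | succ m ih =>
    refine memS_of_ker hiso hsub hext _ (ModuleCat.of R (Fin m → ↥P))
      (LinearMap.funLeft R ↥P Fin.succ) ih ?_
    refine memS_of_injective hiso hsub _ P
      ((LinearMap.proj 0).comp (LinearMap.ker (LinearMap.funLeft R ↥P Fin.succ)).subtype) ?_ hP
    rintro ⟨g, hg⟩ ⟨g', hg'⟩ h
    rw [LinearMap.mem_ker] at hg hg'
    refine Subtype.ext (funext fun i => ?_)
    refine Fin.cases ?_ (fun j => ?_) i
    · exact h
    · exact (congrFun hg j).trans (congrFun hg' j).symm
end Aux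

/-- A class closed under submodules, extensions and directed unions of
submodules satisfies `C_a` for every ideal `a`. -/
theorem satisfiesC_of_closedUnderDirectedUnions (R : Type u) [CommRing R] [IsNoetherianRing R]
    (S : ModClass R) (hiso : IsoClosed R S)
    (hsub : ClosedUnderSub R S) (hext : ClosedUnderExt R S)
    (hdir : ∀ (M : ModuleCat.{u} R) (ι : Type u) [Nonempty ι] (f : ι → Submodule R ↥M),
      Directed (· ≤ ·) f → (∀ i, ModuleCat.of R (f i) ∈ S) → (⨆ i, f i) = ⊤ → M ∈ S)
    (a : Ideal R) :
    SatisfiesC R a S := by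
  intro M htor hT1
  have hmono : ∀ {i j : ℕ}, i ≤ j →
      Submodule.torsionBySet R ↥M ((a ^ i : Ideal R) : Set R) ≤
        Submodule.torsionBySet R ↥M ((a ^ j : Ideal R) : Set R) := fun hij =>
    Submodule.torsionBySet_le_torsionBySet_of_subset
      (SetLike.coe_subset_coe.mpr (Ideal.pow_le_pow_right hij))
  have h1 : ModuleCat.of R (Submodule.torsionBySet R ↥M ((a ^ 1 : Ideal R) : Set R)) ∈ S := by
    rw [pow_one]; exact hT1
  have key : ∀ n : ℕ,
      ModuleCat.of R (Submodule.torsionBySet R ↥M ((a ^ (n + 1) : Ideal R) : Set R)) ∈ S := by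
    intro n
    induction n with
    | zero => exact h1
    | succ n ih =>
      obtain ⟨s, hs⟩ := (IsNoetherian.noetherian (a ^ (n + 1) : Ideal R) : (a ^ (n + 1)).FG)
      have hs' : Ideal.span (↑s : Set R) = a ^ (n + 1) := hs
      have hgen : ∀ i : Fin s.toList.length, s.toList.get i ∈ (a ^ (n + 1) : Ideal R) := by
        intro i
        rw [← hs']
        exact Ideal.subset_span (Finset.mem_coe.mpr (Finset.mem_toList.mp (List.get_mem s.toList i)))
      have hmem : ∀ (x : ↥(Submodule.torsionBySet R ↥M ((a ^ (n + 1 + 1) : Ideal R) : Set R)))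
          (i : Fin s.toList.length),
          s.toList.get i • (x : ↥M) ∈
            Submodule.torsionBySet R ↥M ((a ^ 1 : Ideal R) : Set R) := by
        intro x i
        rw [Submodule.mem_torsionBySet_iff]
        rintro ⟨r, hr⟩
        have hx := (Submodule.mem_torsionBySet_iff _ _).mp x.2
        rw [pow_one] at hr
        have hr' : r ∈ a := hr
        refine (smul_smul r (s.toList.get i) (x : ↥M)).trans (hx ⟨r * s.toList.get i, ?_⟩)
        have h2 : (a ^ (n + 1 + 1) : Ideal R) = a * a ^ (n + 1) := by ring
        show r * s.toList.get i ∈ (a ^ (n + 1 + 1) : Ideal R)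
        rw [h2]
        exact Ideal.mul_mem_mul hr' (hgen i)
      refine memS_of_ker hiso hsub hext _
        (ModuleCat.of R (Fin s.toList.length →
          ↥(ModuleCat.of R (Submodule.torsionBySet R ↥M ((a ^ 1 : Ideal R) : Set R)))))
        (LinearMap.pi (fun i : Fin s.toList.length =>
          LinearMap.codRestrict (Submodule.torsionBySet R ↥M ((a ^ 1 : Ideal R) : Set R))
            (s.toList.get i •
              (Submodule.torsionBySet R ↥M ((a ^ (n + 1 + 1) : Ideal R) : Set R)).subtype)
            (fun x => hmem x i)))
        (memS_pi hiso hsub hext _ h1 s.toList.length) ?_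
      have hker : LinearMap.ker (LinearMap.pi (fun i : Fin s.toList.length =>
          LinearMap.codRestrict (Submodule.torsionBySet R ↥M ((a ^ 1 : Ideal R) : Set R))
            (s.toList.get i •
              (Submodule.torsionBySet R ↥M ((a ^ (n + 1 + 1) : Ideal R) : Set R)).subtype)
            (fun x => hmem x i))) = Submodule.comap
          (Submodule.torsionBySet R ↥M ((a ^ (n + 1 + 1) : Ideal R) : Set R)).subtype
          (Submodule.torsionBySet R ↥M ((a ^ (n + 1) : Ideal R) : Set R)) := by
        ext x
        simp only [LinearMap.mem_ker, Submodule.mem_comap, Submodule.subtype_apply,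
          funext_iff, LinearMap.pi_apply, Pi.zero_apply, Subtype.ext_iff,
          LinearMap.codRestrict_apply, LinearMap.smul_apply, ZeroMemClass.coe_zero]
        constructor
        · intro h
          rw [← hs', ← Submodule.torsionBySet_eq_torsionBySet_span,
            Submodule.mem_torsionBySet_iff]
          intro b
          obtain ⟨i, hi⟩ := List.mem_iff_get.mp (Finset.mem_toList.mpr (Finset.mem_coe.mp b.2))
          rw [← hi]
          exact h i
        · intro h i
          exact (Submodule.mem_torsionBySet_iff _ _).mp h ⟨s.toList.get i, hgen i⟩
      rw [hker]
      exact hiso _ _ ((Submodule.comapSubtypeEquivOfLe (hmono (Nat.le_succ (n + 1)))).symm) ih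
  refine hdir M (ULift.{u} ℕ)
    (fun n => Submodule.torsionBySet R ↥M ((a ^ (n.down + 1) : Ideal R) : Set R))
    (fun i j => ⟨ULift.up (max i.down j.down),
      hmono (Nat.succ_le_succ (le_max_left _ _)),
      hmono (Nat.succ_le_succ (le_max_right _ _))⟩)
    (fun i => key i.down) ?_
  rw [eq_top_iff]
  rintro x -
  refine Submodule.mem_iSup_of_mem (ULift.up ((htor x).choose)) (hmono (Nat.le_succ _) ?_)
  rw [Submodule.mem_torsionBySet_iff]
  rintro ⟨r, hr⟩
  exact (htor x).choose_spec r hr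
end

section
/- Let R be a commutative noetherian ring and let F denote the class of R-modules whose support is a finite set. Then F satisfies condition C_a for every ideal a of R. -/
universe u

open CategoryTheory Opposite

/-- The class of modules with finite support satisfies `C_a` for every ideal. -/
theorem finSupp_satisfiesC (R : Type u) [CommRing R] [IsNoetherianRing R] (a : Ideal R) :
    SatisfiesC R a (FinSuppCls R) := by
  classical
  intro M htor hfin
  refine Set.Finite.subset hfin ?_
  intro p hp
  rw [Module.mem_support_iff'] at hp ⊢
  obtain ⟨m, hm⟩ := hp
  have hone : (1 : R) ∉ p.asIdeal := (Ideal.ne_top_iff_one _).mp p.isPrime.ne_top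
  set K : Set ↥M := {x | ∃ s ∉ p.asIdeal, s • x = 0} with hKdef
  have hmK : m ∉ K := by rintro ⟨s, hs, hsx⟩; exact hm s hs hsx
  have hex : ∃ n : ℕ, ∀ r ∈ a ^ n, r • m ∈ K := by
    obtain ⟨n, hn⟩ := htor m
    exact ⟨n, fun r hr => ⟨1, hone, by rw [hn r hr, smul_zero]⟩⟩
  set n0 := Nat.find hex with hn0def
  have hn0 : ∀ r ∈ a ^ n0, r • m ∈ K := Nat.find_spec hex
  have hn0pos : n0 ≠ 0 := by
    intro h
    have h1 : (1 : R) ∈ a ^ n0 := by rw [h, pow_zero, Ideal.one_eq_top]; trivial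
    have := hn0 1 h1
    rw [one_smul] at this; exact hmK this
  have hsucc : n0 - 1 + 1 = n0 := Nat.succ_pred_eq_of_ne_zero hn0pos
  have hmin : ¬ ∀ r ∈ a ^ (n0 - 1), r • m ∈ K :=
    Nat.find_min hex (Nat.sub_lt (Nat.pos_of_ne_zero hn0pos) one_pos)
  push_neg at hmin
  obtain ⟨c, hc, hcK⟩ := hmin
  set x : ↥M := c • m with hxdef
  have hax : ∀ r ∈ a, r • x ∈ K := by
    intro r hr
    have hrc : r * c ∈ a ^ n0 := by
      rw [← hsucc, pow_succ']
      exact Ideal.mul_mem_mul hr hc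
    have := hn0 (r * c) hrc
    rwa [mul_smul] at this
  obtain ⟨t, hta⟩ : a.FG := IsNoetherian.noetherian a
  have aux : ∀ u : Finset R, (∀ r ∈ u, ∃ s ∉ p.asIdeal, s • (r • x) = 0) →
      ∃ s ∉ p.asIdeal, ∀ r ∈ u, (s * r) • x = 0 := by
    intro u
    induction u using Finset.induction_on with
    | empty => exact fun _ => ⟨1, hone, fun r hr => absurd hr (Finset.notMem_empty r)⟩
    | @insert r u hru ih =>
      intro h
      obtain ⟨s1, hs1, hs1x⟩ := h r (Finset.mem_insert_self r u)
      obtain ⟨s2, hs2, hs2x⟩ := ih fun r' hr' => h r' (Finset.mem_insert_of_mem hr')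
      refine ⟨s1 * s2, fun hmem => ?_, fun r' hr' => ?_⟩
      · rcases p.isPrime.mem_or_mem hmem with h' | h'
        · exact hs1 h'
        · exact hs2 h'
      · rcases Finset.mem_insert.mp hr' with rfl | hr'
        · rw [show s1 * s2 * r' = s2 * (s1 * r') from by ring, mul_smul, mul_smul, hs1x,
            smul_zero]
        · rw [show s1 * s2 * r' = s1 * (s2 * r') from by ring, mul_smul, hs2x r' hr',
            smul_zero]
  obtain ⟨s, hs, hsx⟩ := aux t fun r hr => by
    obtain ⟨s', hs', h'⟩ := hax r (hta ▸ Ideal.subset_span hr)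
    exact ⟨s', hs', h'⟩
  set y : ↥M := s • x with hydef
  have hann : ∀ r ∈ a, r • y = 0 := by
    intro r hr
    have hle : a ≤ (R ∙ y).annihilator := by
      rw [← hta, Ideal.span_le]
      intro r' hr'
      rw [SetLike.mem_coe, Submodule.mem_annihilator_span_singleton, hydef, smul_smul,
        mul_comm r' s]
      exact hsx r' hr'
    exact Submodule.mem_annihilator_span_singleton y r |>.mp (hle hr)
  have hy : y ∈ Submodule.torsionBySet R ↥M (a : Set R) :=
    (Submodule.mem_torsionBySet_iff _ _).mpr fun ⟨r, hr⟩ => hann r hr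
  refine ⟨⟨y, hy⟩, fun r hr hcontra => ?_⟩
  have hry : r • y = 0 := congrArg Subtype.val hcontra
  rw [hydef, smul_smul] at hry
  have hrs : r * s ∉ p.asIdeal := fun hmem => (p.isPrime.mem_or_mem hmem).elim hr hs
  exact hcK ⟨r * s, hrs, hry⟩
end

section
/- Let R be a commutative noetherian ring and let Fw denote the class of finitely weakly Laskerian R-modules. Then: (i) if M ∈ Fw and K is a finitely generated submodule of M, then M/K ∈ Fw; (ii) Fw is closed under submodules and under extensions. -/
universe u

open CategoryTheory Opposite

/-- Associated primes of a module lie in the union of the associated primes of a submodule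
and those of the corresponding quotient. -/
theorem assocPrimes_subset_union {R M : Type*} [CommRing R] [AddCommGroup M] [Module R M]
    (A : Submodule R M) :
    associatedPrimes R M ⊆ associatedPrimes R A ∪ associatedPrimes R (M ⧸ A) := by
  exact associatedPrimes.subset_union_of_exact (f := A.subtype) (g := A.mkQ) A.injective_subtype
    (LinearMap.exact_subtype_mkQ A)

/-- (i) a quotient of a finitely weakly Laskerian module by a finitely
generated submodule is finitely weakly Laskerian; (ii) the class of finitely weakly
Laskerian modules is closed under submodules and extensions. -/
theorem fwLaskerian_closure (R : Type u) [CommRing R] [IsNoetherianRing R] :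
    (∀ (M : Type u) [AddCommGroup M] [Module R M] (K : Submodule R M),
       IsFWLaskerian R M → K.FG → IsFWLaskerian R (M ⧸ K)) ∧
    (∀ (M : Type u) [AddCommGroup M] [Module R M] (L : Submodule R M),
       IsFWLaskerian R M → IsFWLaskerian R L) ∧
    (∀ (M : Type u) [AddCommGroup M] [Module R M] (L : Submodule R M),
       IsFWLaskerian R L → IsFWLaskerian R (M ⧸ L) → IsFWLaskerian R M) := by
  refine ⟨?_, ?_, ?_⟩
  · -- quotient by fg submodule
    intro M _ _ K hM hK K' hK'
    set J := K'.comap K.mkQ with hJ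
    have hKJ : K ≤ J := by
      intro x hx
      simp only [hJ, Submodule.mem_comap, Submodule.mkQ_apply,
        (Submodule.Quotient.mk_eq_zero K).mpr hx]
      exact K'.zero_mem
    have hmap : J.map K.mkQ = K' :=
      Submodule.map_comap_eq_of_surjective (Submodule.mkQ_surjective K) K'
    have hJfg : J.FG := by
      apply Submodule.fg_of_fg_map_of_fg_inf_ker K.mkQ
      · rw [hmap]; exact hK'
      · rw [Submodule.ker_mkQ, inf_eq_right.mpr hKJ]; exact hK
    have e : ((M ⧸ K) ⧸ K') ≃ₗ[R] (M ⧸ J) := by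
      rw [← hmap]
      exact Submodule.quotientQuotientEquivQuotient K J hKJ
    rw [LinearEquiv.AssociatedPrimes.eq e]
    exact hM J hJfg
  · -- submodules
    intro M _ _ L hM K hK
    set K' := K.map L.subtype with hK'def
    have hK' : K'.FG := hK.map L.subtype
    have hle : K ≤ K'.comap L.subtype := fun x hx => ⟨x, hx, rfl⟩
    set f : (L ⧸ K) →ₗ[R] (M ⧸ K') := Submodule.mapQ K K' L.subtype hle with hf
    have hinj : Function.Injective f := by
      rw [← LinearMap.ker_eq_bot, eq_bot_iff]
      intro a ha
      obtain ⟨x, rfl⟩ := Submodule.Quotient.mk_surjective K a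
      rw [LinearMap.mem_ker, hf, Submodule.mapQ_apply, Submodule.Quotient.mk_eq_zero,
        hK'def] at ha
      rw [Submodule.mem_bot, Submodule.Quotient.mk_eq_zero]
      obtain ⟨z, hz, hz2⟩ := ha
      have hzx : z = x := Subtype.coe_injective hz2
      rwa [← hzx]
    exact (hM K' hK').subset (associatedPrimes.subset_of_injective (f := f) hinj)
  · -- extensions
    intro M _ _ L hL hML K hK
    haveI : IsNoetherian R K := isNoetherian_of_fg_of_noetherian K hK
    -- the kernel of L → M ⧸ K is finitely generated
    have hLK : (L ⊓ K).FG := by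
      have h1 : (Submodule.comap K.subtype L).FG := IsNoetherian.noetherian _
      have h2 := h1.map K.subtype
      rwa [Submodule.map_comap_subtype, inf_comm] at h2
    set f : ↥L →ₗ[R] (M ⧸ K) := K.mkQ ∘ₗ L.subtype with hf
    have hker : LinearMap.ker f = Submodule.comap L.subtype K := by
      ext x
      simp [hf, Submodule.Quotient.mk_eq_zero]
    have hkerfg : (LinearMap.ker f).FG := by
      rw [hker]
      apply Submodule.fg_of_fg_map_of_fg_inf_ker L.subtype
      · rw [Submodule.map_comap_subtype]; exact hLK
      · rw [Submodule.ker_subtype, inf_bot_eq]; exact Submodule.fg_bot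
    have hrange : LinearMap.range f = L.map K.mkQ := by
      rw [hf, LinearMap.range_comp, Submodule.range_subtype]
    -- associated primes of the range part
    have hA : (associatedPrimes R ↥(LinearMap.range f)).Finite := by
      rw [← LinearEquiv.AssociatedPrimes.eq (f.quotKerEquivRange)]
      exact hL (LinearMap.ker f) hkerfg
    -- associated primes of the quotient part
    have hbot : K.map K.mkQ = ⊥ := by
      rw [eq_bot_iff]
      rintro x ⟨y, hy, rfl⟩
      simpa [Submodule.mkQ_apply, Submodule.Quotient.mk_eq_zero] using hy
    have hmapsup : (L ⊔ K).map K.mkQ = LinearMap.range f := by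
      rw [hrange, Submodule.map_sup, hbot, sup_bot_eq]
    -- (M ⧸ K) ⧸ range f ≃ M ⧸ (L ⊔ K) ≃ (M ⧸ L) ⧸ (K.map L.mkQ)
    have e1 : ((M ⧸ K) ⧸ LinearMap.range f) ≃ₗ[R] (M ⧸ (L ⊔ K)) := by
      rw [← hmapsup]
      exact Submodule.quotientQuotientEquivQuotient K (L ⊔ K) le_sup_right
    have hbot' : L.map L.mkQ = ⊥ := by
      rw [eq_bot_iff]
      rintro x ⟨y, hy, rfl⟩
      simpa [Submodule.mkQ_apply, Submodule.Quotient.mk_eq_zero] using hy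
    have hmapsup' : (L ⊔ K).map L.mkQ = K.map L.mkQ := by
      rw [Submodule.map_sup, hbot', bot_sup_eq]
    have e2 : ((M ⧸ L) ⧸ (K.map L.mkQ)) ≃ₗ[R] (M ⧸ (L ⊔ K)) := by
      rw [← hmapsup']
      exact Submodule.quotientQuotientEquivQuotient L (L ⊔ K) le_sup_left
    have hB : (associatedPrimes R ((M ⧸ K) ⧸ LinearMap.range f)).Finite := by
      rw [LinearEquiv.AssociatedPrimes.eq (e1.trans e2.symm)]
      exact hML (K.map L.mkQ) (hK.map L.mkQ)
    exact (hA.union hB).subset (assocPrimes_subset_union (LinearMap.range f))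
end

section
/- Let R be a commutative noetherian ring and let Fw denote the class of finitely weakly Laskerian R-modules. Then Fw satisfies condition C_a for every ideal a of R. -/
universe u

open CategoryTheory Opposite

section AuxAss

variable {R : Type*} [CommRing R] {M : Type*} [AddCommGroup M] [Module R M]

lemma mem_associatedPrimes_iff_ann [IsNoetherianRing R] {p : Ideal R} :
    p ∈ associatedPrimes R M ↔ p.IsPrime ∧ ∃ x : M, p = (R ∙ x).annihilator := by
  rw [AssociatedPrimes.mem_iff, isAssociatedPrime_iff]
  have : ∀ x : M, (⊥ : Submodule R M).colon {x} = (R ∙ x).annihilator := fun x => by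
    ext r
    rw [Submodule.mem_colon_singleton, Submodule.mem_bot,
      Submodule.mem_annihilator_span_singleton]
  simp only [this]

/-- If a prime is the annihilator of an element lying in a submodule `S`, it is an
associated prime of `S`. -/
lemma mem_associatedPrimes_of_mem [IsNoetherianRing R] {p : Ideal R} {x : M} (hp : p.IsPrime)
    (hx : p = (R ∙ x).annihilator) (S : Submodule R M) (hxS : x ∈ S) :
    p ∈ associatedPrimes R ↥S := by
  refine mem_associatedPrimes_iff_ann.mpr ⟨hp, ⟨x, hxS⟩, ?_⟩
  ext r
  rw [hx, Submodule.mem_annihilator_span_singleton, Submodule.mem_annihilator_span_singleton]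
  constructor
  · intro h
    exact Subtype.ext (by simpa using h)
  · intro h
    simpa using congrArg Subtype.val h

/-- Associated primes of a module are contained in those of a submodule together with
those of the quotient. -/
lemma associatedPrimes_subset_union [IsNoetherianRing R] (L : Submodule R M) :
    associatedPrimes R M ⊆ associatedPrimes R ↥L ∪ associatedPrimes R (M ⧸ L) := by
  rintro p hpa
  obtain ⟨hp, x, hx⟩ := mem_associatedPrimes_iff_ann.mp hpa
  by_cases hcap : ∀ r : R, r • x ∈ L → r • x = 0
  · right
    refine mem_associatedPrimes_iff_ann.mpr ⟨hp, L.mkQ x, ?_⟩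
    ext r
    rw [hx, Submodule.mem_annihilator_span_singleton,
      Submodule.mem_annihilator_span_singleton, ← map_smul, Submodule.mkQ_apply,
      Submodule.Quotient.mk_eq_zero]
    exact ⟨fun h => h ▸ L.zero_mem, hcap r⟩
  · left
    push_neg at hcap
    obtain ⟨r, hrL, hr0⟩ := hcap
    refine mem_associatedPrimes_of_mem hp ?_ L hrL
    ext s
    rw [Submodule.mem_annihilator_span_singleton]
    constructor
    · intro hs
      have hsx : s • x = 0 := by
        have := hx ▸ hs
        rwa [Submodule.mem_annihilator_span_singleton] at this
      rw [smul_comm, hsx, smul_zero]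
    · intro hs
      have hsr : s * r ∈ p := by
        rw [hx, Submodule.mem_annihilator_span_singleton, mul_smul]
        exact hs
      rcases hp.mem_or_mem hsr with h | h
      · exact h
      · exfalso
        apply hr0
        have := hx ▸ h
        rwa [Submodule.mem_annihilator_span_singleton] at this

/-- Associated primes of the cyclic module `R ∙ x` form a finite set when the annihilator
of `x` is prime (in a noetherian ring). -/
lemma associatedPrimes_span_singleton_finite [IsNoetherianRing R] {p : Ideal R} {x : M}
    (hp : p.IsPrime) (hx : p = (R ∙ x).annihilator) :
    (associatedPrimes R ↥(R ∙ x)).Finite := by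
  have hker : LinearMap.ker (LinearMap.toSpanSingleton R M x) = p := by
    ext r
    rw [LinearMap.mem_ker, LinearMap.toSpanSingleton_apply, hx,
      Submodule.mem_annihilator_span_singleton]
  have e1 : (R ⧸ p) ≃ₗ[R] ↥(LinearMap.range (LinearMap.toSpanSingleton R M x)) :=
    (Submodule.quotEquivOfEq p _ hker.symm).trans
      (LinearMap.quotKerEquivRange (LinearMap.toSpanSingleton R M x))
  have e2 : ↥(LinearMap.range (LinearMap.toSpanSingleton R M x)) ≃ₗ[R] ↥(R ∙ x) :=
    LinearEquiv.ofEq _ _ (LinearMap.span_singleton_eq_range R M x).symm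
  rw [← LinearEquiv.AssociatedPrimes.eq (e1.trans e2),
    associatedPrimes.eq_singleton_of_isPrimary hp.isPrimary, hp.radical]
  exact Set.finite_singleton _

/-- Finiteness of the set of associated primes of a finitely generated module over a
noetherian ring. -/
lemma associatedPrimes_finite (R M : Type*) [CommRing R] [IsNoetherianRing R] [AddCommGroup M]
    [Module R M] [Module.Finite R M] : (associatedPrimes R M).Finite := by
  have h : ∀ N : Submodule R M, (associatedPrimes R (M ⧸ N)).Finite := by
    intro N
    induction N using IsNoetherian.induction with
    | _ N IH =>
      rcases Set.eq_empty_or_nonempty (associatedPrimes R (M ⧸ N)) with he | ⟨p, hpa⟩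
      · rw [he]; exact Set.finite_empty
      · obtain ⟨hp, x, hx⟩ := mem_associatedPrimes_iff_ann.mp hpa
        have hx0 : x ≠ 0 := by
          rintro rfl
          apply hp.ne_top
          rw [hx, Submodule.span_singleton_eq_bot.mpr rfl, Submodule.annihilator_bot]
        set N' := Submodule.comap N.mkQ (R ∙ x) with hN'
        have hlt : N < N' := by
          refine SetLike.lt_iff_le_and_exists.mpr ⟨?_, ?_⟩
          · intro y hy
            show N.mkQ y ∈ R ∙ x
            rw [Submodule.mkQ_apply, (Submodule.Quotient.mk_eq_zero N).mpr hy]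
            exact Submodule.zero_mem _
          · obtain ⟨m, hm⟩ := N.mkQ_surjective x
            refine ⟨m, ?_, fun hmN => hx0 ?_⟩
            · show N.mkQ m ∈ R ∙ x
              rw [hm]
              exact Submodule.mem_span_singleton_self x
            · rw [← hm, Submodule.mkQ_apply]
              exact (Submodule.Quotient.mk_eq_zero N).mpr hmN
        have hmap : N'.map N.mkQ = R ∙ x :=
          Submodule.map_comap_eq_of_surjective N.mkQ_surjective _
        have e : ((M ⧸ N) ⧸ (R ∙ x)) ≃ₗ[R] M ⧸ N' :=
          (Submodule.quotEquivOfEq _ _ hmap.symm).trans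
            (Submodule.quotientQuotientEquivQuotient N N' hlt.le)
        refine Set.Finite.subset
          (Set.Finite.union (associatedPrimes_span_singleton_finite hp hx) ?_)
          (associatedPrimes_subset_union (M := M ⧸ N) (R ∙ x))
        rw [LinearEquiv.AssociatedPrimes.eq e]
        exact IH N' hlt
  have := h ⊥
  rwa [LinearEquiv.AssociatedPrimes.eq (Submodule.quotEquivOfEqBot (⊥ : Submodule R M) rfl)]
    at this

end AuxAss

/-- The class of finitely weakly Laskerian modules satisfies `C_a` for
every ideal `a`. -/
theorem fwLaskerian_satisfiesC (R : Type u) [CommRing R] [IsNoetherianRing R] (a : Ideal R) :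
    SatisfiesC R a {M : ModuleCat.{u} R | IsFWLaskerian R ↥M} := by
  intro M htor hN
  simp only [Set.mem_setOf_eq] at hN ⊢
  intro K hK
  set Mm := ↥M
  set N : Submodule R Mm := Submodule.torsionBySet R Mm ↑a with hNdef
  set T : Submodule R (Mm ⧸ K) := Submodule.torsionBySet R (Mm ⧸ K) ↑a with hTdef
  -- the map from N to M/K and its image L
  set f : ↥N →ₗ[R] (Mm ⧸ K) := K.mkQ ∘ₗ N.subtype with hfdef
  set L : Submodule R (Mm ⧸ K) := LinearMap.range f with hLdef
  have hL : L ≤ T := by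
    rintro _ ⟨⟨y, hy⟩, rfl⟩
    rw [hTdef, Submodule.mem_torsionBySet_iff]
    rintro ⟨r, hr⟩
    have hry : r • y = 0 := by
      rw [hNdef, Submodule.mem_torsionBySet_iff] at hy
      exact hy ⟨r, hr⟩
    show r • f ⟨y, hy⟩ = 0
    rw [hfdef]
    simp only [LinearMap.coe_comp, Function.comp_apply, Submodule.coe_subtype, ← map_smul]
    show K.mkQ (r • y) = 0
    rw [hry, map_zero]
  set Lt : Submodule R ↥T := Submodule.comap T.subtype L with hLtdef
  -- Step 1: Ass(M/K) ⊆ Ass(T)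
  have step1 : associatedPrimes R (Mm ⧸ K) ⊆ associatedPrimes R ↥T := by
    rintro p hpa
    obtain ⟨hp, x, hx⟩ := mem_associatedPrimes_iff_ann.mp hpa
    obtain ⟨m, hm⟩ := K.mkQ_surjective x
    obtain ⟨n, hn⟩ := htor m
    have hap : ∀ r ∈ a, r ∈ p := by
      intro r hr
      have h1 : r ^ n • x = 0 := by
        rw [← hm, ← map_smul, hn _ (Ideal.pow_mem_pow hr n), map_zero]
      have h2 : r ^ n ∈ p := by
        rw [hx, Submodule.mem_annihilator_span_singleton]
        exact h1
      exact hp.mem_of_pow_mem n h2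
    have hxT : x ∈ T := by
      rw [hTdef, Submodule.mem_torsionBySet_iff]
      rintro ⟨r, hr⟩
      have hrp : r ∈ p := hap r hr
      rw [hx, Submodule.mem_annihilator_span_singleton] at hrp
      exact hrp
    exact mem_associatedPrimes_of_mem hp hx T hxT
  -- kernel of f is finitely generated
  have hker : LinearMap.ker f = Submodule.comap N.subtype K := by
    rw [hfdef, LinearMap.ker_comp, Submodule.ker_mkQ]
  haveI hKfin : Module.Finite R ↥K := Module.Finite.iff_fg.mpr hK
  have hNK : (N ⊓ K).FG := by
    have h1 : (Submodule.comap K.subtype (N ⊓ K)).FG := IsNoetherian.noetherian _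
    have h2 : Submodule.map K.subtype (Submodule.comap K.subtype (N ⊓ K)) = N ⊓ K := by
      rw [Submodule.map_comap_eq, Submodule.range_subtype]
      exact inf_eq_right.mpr inf_le_right
    exact h2 ▸ h1.map K.subtype
  have hkerfg : (LinearMap.ker f).FG := by
    apply Submodule.fg_of_fg_map_injective N.subtype N.injective_subtype
    rw [hker, Submodule.map_comap_subtype]
    exact hNK
  -- Ass(Lt) is finite
  have hLtfin : (associatedPrimes R ↥Lt).Finite := by
    have e1 : ↥Lt ≃ₗ[R] ↥L := Submodule.comapSubtypeEquivOfLe hL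
    have e2 : (↥N ⧸ LinearMap.ker f) ≃ₗ[R] ↥L := f.quotKerEquivRange
    rw [LinearEquiv.AssociatedPrimes.eq (e1.trans e2.symm)]
    exact hN (LinearMap.ker f) hkerfg
  -- T / Lt is a finitely generated module
  obtain ⟨s, hs⟩ := (IsNoetherian.noetherian a : a.FG)
  set C : Submodule R Mm := Submodule.comap K.mkQ T with hCdef
  have hCmem : ∀ (x : ↥C) (r : R), r ∈ a → r • (x : Mm) ∈ K := by
    rintro ⟨x, hx⟩ r hr
    have : K.mkQ x ∈ T := hx
    rw [hTdef, Submodule.mem_torsionBySet_iff] at this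
    have h0 := this ⟨r, hr⟩
    show r • x ∈ K
    rw [← Submodule.Quotient.mk_eq_zero, ← Submodule.mkQ_apply, map_smul]
    exact h0
  set φ : ↥C →ₗ[R] (↥(s : Set R) → ↥K) :=
    LinearMap.pi (fun r => LinearMap.codRestrict K ((r : R) • C.subtype)
      (fun x => hCmem x r (hs ▸ Submodule.subset_span r.2))) with hφdef
  have hkerφ : LinearMap.ker φ = Submodule.comap C.subtype N := by
    ext x
    simp only [LinearMap.mem_ker, Submodule.mem_comap, hφdef]
    constructor
    · intro hx
      have hxs : ∀ r : ↥(s : Set R), (r : R) • (x : Mm) = 0 := by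
        intro r
        have h1 := congrFun hx r
        exact congrArg Subtype.val h1
      rw [hNdef, Submodule.mem_torsionBySet_iff]
      rintro ⟨r, hr⟩
      have hle : a ≤ (R ∙ (x : Mm)).annihilator := by
        rw [← hs, Submodule.span_le]
        intro t ht
        rw [SetLike.mem_coe, Submodule.mem_annihilator_span_singleton]
        exact hxs ⟨t, ht⟩
      have := hle hr
      rwa [Submodule.mem_annihilator_span_singleton] at this
    · intro hx
      ext r
      have : (r : R) • (x : Mm) = 0 := by
        rw [hNdef, Submodule.mem_torsionBySet_iff] at hx
        exact hx ⟨(r : R), hs ▸ Submodule.subset_span r.2⟩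
      exact this
  haveI : Module.Finite R (↥C ⧸ LinearMap.ker φ) := by
    haveI : Module.Finite R ↥(LinearMap.range φ) :=
      Module.Finite.iff_fg.mpr (IsNoetherian.noetherian _)
    exact Module.Finite.equiv φ.quotKerEquivRange.symm
  -- surjection from C/ker φ onto T/Lt
  set ψ : ↥C →ₗ[R] ↥T := LinearMap.codRestrict T (K.mkQ ∘ₗ C.subtype) (fun x => x.2) with hψdef
  have hψsurj : Function.Surjective ψ := by
    rintro ⟨y, hy⟩
    obtain ⟨m, hm⟩ := K.mkQ_surjective y
    refine ⟨⟨m, show K.mkQ m ∈ T from hm ▸ hy⟩, ?_⟩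
    exact Subtype.ext hm
  set g : ↥C →ₗ[R] (↥T ⧸ Lt) := Lt.mkQ ∘ₗ ψ with hgdef
  have hleker : LinearMap.ker φ ≤ LinearMap.ker g := by
    intro x hx
    rw [hkerφ] at hx
    have hxN : (x : Mm) ∈ N := hx
    rw [hgdef, LinearMap.mem_ker]
    simp only [LinearMap.coe_comp, Function.comp_apply, Submodule.mkQ_apply]
    rw [Submodule.Quotient.mk_eq_zero]
    show (ψ x : Mm ⧸ K) ∈ L
    refine ⟨⟨(x : Mm), hxN⟩, ?_⟩
    rfl
  set g' : (↥C ⧸ LinearMap.ker φ) →ₗ[R] (↥T ⧸ Lt) := Submodule.liftQ _ g hleker with hg'def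
  have hg'surj : Function.Surjective g' := by
    intro y
    obtain ⟨x, hx⟩ := Lt.mkQ_surjective y
    obtain ⟨c, hc⟩ := hψsurj x
    exact ⟨Submodule.Quotient.mk c, by
      rw [hg'def, Submodule.liftQ_apply, hgdef]
      simp [hc, hx]⟩
  haveI : Module.Finite R (↥T ⧸ Lt) := Module.Finite.of_surjective g' hg'surj
  have hQfin : (associatedPrimes R (↥T ⧸ Lt)).Finite := associatedPrimes_finite R _
  -- combine
  exact Set.Finite.subset (Set.Finite.union hLtfin hQfin)
    (step1.trans (associatedPrimes_subset_union Lt))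
end

section
/- Let R be a commutative noetherian ring, let p be a prime ideal of R, and let E be an injective R-module containing a copy of R/p as an essential submodule (so E is an injective envelope of R/p). Let S be a Serre class of R-modules and let N denote the class of finitely generated modules. If E belongs to the extension class NS, then E ∈ S provided either the height of p is positive, or the height of p is zero and R/p ∈ S. -/
universe u

open CategoryTheory Opposite

section MyAux

variable {R : Type u} [CommRing R] {S : ModClass R}

lemma memS_of_surj (hS : IsSerre R S) {A B : Type u} [AddCommGroup A] [Module R A]
    [AddCommGroup B] [Module R B] (hA : ModuleCat.of R A ∈ S) (g : A →ₗ[R] B)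
    (hg : Function.Surjective g) : ModuleCat.of R B ∈ S := by
  have h1 := hS.quot (ModuleCat.of R A) (LinearMap.ker g) hA
  exact hS.isoClosed _ _ (g.quotKerEquivOfSurjective hg) h1

lemma memS_of_inj (hS : IsSerre R S) {A B : Type u} [AddCommGroup A] [Module R A]
    [AddCommGroup B] [Module R B] (hB : ModuleCat.of R B ∈ S) (g : A →ₗ[R] B)
    (hg : Function.Injective g) : ModuleCat.of R A ∈ S := by
  have h1 := hS.sub (ModuleCat.of R B) (LinearMap.range g) hB
  exact hS.isoClosed _ _ (LinearEquiv.ofInjective g hg).symm h1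

lemma memS_of_subsingleton (hS : IsSerre R S) (A : Type u) [AddCommGroup A] [Module R A]
    [Subsingleton A] : ModuleCat.of R A ∈ S := by
  have e : PUnit.{u+1} ≃ₗ[R] A :=
    { toFun := fun _ => 0
      map_add' := by intros; simp
      map_smul' := by intros; simp
      invFun := fun _ => PUnit.unit
      left_inv := fun x => Subsingleton.elim _ _
      right_inv := fun x => Subsingleton.elim _ _ }
  exact hS.isoClosed _ _ e hS.zero_mem

lemma pkilled_mem (hS : IsSerre R S) (p : Ideal R) (hRp : ModuleCat.of R (R ⧸ p) ∈ S)
    (M : Type u) [AddCommGroup M] [Module R M] (hfin : Module.Finite R M)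
    (hkill : ∀ (x : M) (r : R), r ∈ p → r • x = 0) : ModuleCat.of R M ∈ S := by
  have key : ∀ N : Submodule R M, N.FG → ModuleCat.of R ↥N ∈ S := by
    intro N hN
    refine Submodule.fg_induction (motive := fun N _ => ModuleCat.of R ↥N ∈ S) ?_ ?_ N hN
    · intro x
      rw [LinearMap.span_singleton_eq_range]
      have hker : p ≤ LinearMap.ker (LinearMap.toSpanSingleton R M x).rangeRestrict := by
        intro r hr
        rw [LinearMap.ker_rangeRestrict, LinearMap.mem_ker, LinearMap.toSpanSingleton_apply]
        exact hkill x r hr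
      set φ := Submodule.liftQ p (LinearMap.toSpanSingleton R M x).rangeRestrict hker with hφdef
      have hφ : Function.Surjective φ := by
        intro y
        obtain ⟨r, hr⟩ := (LinearMap.toSpanSingleton R M x).surjective_rangeRestrict y
        exact ⟨Submodule.Quotient.mk r, by rw [hφdef, Submodule.liftQ_apply]; exact hr⟩
      exact memS_of_surj hS hRp φ hφ
    · intro N₁ N₂ _ _ h₁ h₂
      set K := Submodule.comap (N₁ ⊔ N₂).subtype N₁ with hKdef
      refine hS.ext (ModuleCat.of R ↥(N₁ ⊔ N₂)) K ?_ ?_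
      · exact hS.isoClosed _ _ (Submodule.comapSubtypeEquivOfLe le_sup_left).symm h₁
      · set ψ := K.mkQ ∘ₗ Submodule.inclusion (le_sup_right : N₂ ≤ N₁ ⊔ N₂) with hψdef
        have hψ : Function.Surjective ψ := by
          intro z
          obtain ⟨w, rfl⟩ := Submodule.Quotient.mk_surjective _ z
          obtain ⟨y₁, hy₁, y₂, hy₂, hw⟩ := Submodule.mem_sup.1 w.2
          refine ⟨⟨y₂, hy₂⟩, ?_⟩
          have hmem : (Submodule.inclusion (le_sup_right : N₂ ≤ N₁ ⊔ N₂) ⟨y₂, hy₂⟩ - w) ∈ K := by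
            rw [hKdef, Submodule.mem_comap]
            have hcoe : ((Submodule.inclusion (le_sup_right : N₂ ≤ N₁ ⊔ N₂) ⟨y₂, hy₂⟩ - w :
                ↥(N₁ ⊔ N₂)) : M) = y₂ - w := rfl
            rw [Submodule.subtype_apply, hcoe]
            have : y₂ - (w : M) = -y₁ := by rw [← hw]; abel
            rw [this]
            exact N₁.neg_mem hy₁
          show K.mkQ _ = Submodule.Quotient.mk w
          rw [Submodule.mkQ_apply, Submodule.Quotient.eq]
          exact hmem
        exact memS_of_surj hS h₂ ψ hψ
  have htop := key ⊤ (Module.finite_def.mp hfin)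
  exact hS.isoClosed _ _ (Submodule.topEquiv) htop

lemma ptkilled_mem [IsNoetherianRing R] (hS : IsSerre R S) (p : Ideal R)
    (hRp : ModuleCat.of R (R ⧸ p) ∈ S) :
    ∀ (t : ℕ) (M : Type u) [AddCommGroup M] [Module R M], Module.Finite R M →
      (∀ (x : M) (r : R), r ∈ p ^ t → r • x = 0) → ModuleCat.of R M ∈ S := by
  intro t
  induction t with
  | zero =>
    intro M _ _ _ hkill
    have hsub : Subsingleton M := ⟨fun a b => by
      have ha := hkill a 1 (by rw [pow_zero, Ideal.one_eq_top]; trivial)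
      have hb := hkill b 1 (by rw [pow_zero, Ideal.one_eq_top]; trivial)
      rw [one_smul] at ha hb
      rw [ha, hb]⟩
    exact memS_of_subsingleton hS M
  | succ t ih =>
    intro M _ _ hfin hkill
    haveI := hfin
    haveI : IsNoetherian R M := isNoetherian_of_isNoetherianRing_of_finite R M
    set K : Submodule R M :=
      { carrier := {x | ∀ r ∈ p ^ t, r • x = 0}
        zero_mem' := fun r _ => smul_zero r
        add_mem' := fun {x y} hx hy r hr => by
          rw [smul_add, hx r hr, hy r hr, add_zero]
        smul_mem' := fun c x hx r hr => by
          rw [smul_comm, hx r hr, smul_zero] } with hKdef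
    have hKfin : Module.Finite R ↥K := Module.Finite.iff_fg.mpr (IsNoetherian.noetherian K)
    have hK : ModuleCat.of R ↥K ∈ S := by
      refine ih ↥K hKfin ?_
      intro x r hr
      exact Subtype.ext (by
        rw [SetLike.val_smul, ZeroMemClass.coe_zero]
        exact x.2 r hr)
    have hQ : ModuleCat.of R (M ⧸ K) ∈ S := by
      refine pkilled_mem hS p hRp (M ⧸ K) inferInstance ?_
      intro x r hr
      obtain ⟨y, rfl⟩ := Submodule.Quotient.mk_surjective K x
      rw [← Submodule.Quotient.mk_smul, Submodule.Quotient.mk_eq_zero]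
      intro s hs
      rw [← mul_smul]
      exact hkill y (s * r) (by rw [pow_succ]; exact Ideal.mul_mem_mul hs hr)
    exact hS.ext (ModuleCat.of R M) K hK hQ

end MyAux

/-- If `E` is an injective module containing a copy of `R/p` as an
essential submodule and `E ∈ NS` for a Serre class `S`, then `E ∈ S` provided either
`ht p > 0`, or `ht p = 0` and `R/p ∈ S`. -/
theorem injEnvelope_mem_of_mem_extCls_fg (R : Type u) [CommRing R] [IsNoetherianRing R]
    (p : Ideal R) (hp : p.IsPrime)
    (E : Type u) [AddCommGroup E] [Module R E] (hE : Module.Injective R E)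
    (f : (R ⧸ p) →ₗ[R] E) (hf : Function.Injective f)
    (hess : ∀ N : Submodule R E, N ≠ ⊥ → LinearMap.range f ⊓ N ≠ ⊥)
    (S : ModClass R) (hS : IsSerre R S)
    (hmem : ModuleCat.of R E ∈ ExtCls R (FGCls R) S)
    (h : 0 < Order.height (⟨p, hp⟩ : PrimeSpectrum R) ∨
      (Order.height (⟨p, hp⟩ : PrimeSpectrum R) = 0 ∧ ModuleCat.of R (R ⧸ p) ∈ S)) :
    ModuleCat.of R E ∈ S := by
  classical
  haveI hpI : p.IsPrime := hp
  obtain ⟨L0, hLfg0, hLq0⟩ := hmem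
  have hLex : ∃ L : Submodule R E, Module.Finite R ↥L ∧ ModuleCat.of R (E ⧸ L) ∈ S :=
    ⟨L0, hLfg0, hLq0⟩
  obtain ⟨L, hLfg, hLq⟩ := hLex
  have hone : (1 : R) ∉ p := fun h1 => hp.ne_top ((Ideal.eq_top_iff_one p).2 h1)
  -- `Ann x` : the annihilator ideal of `x : E`
  set Ann : E → Ideal R := fun x => LinearMap.ker (LinearMap.toSpanSingleton R E x) with hAnnDef
  have memAnn : ∀ (x : E) (r : R), r ∈ Ann x ↔ r • x = 0 := by
    intro x r
    rw [hAnnDef]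
    simp [LinearMap.mem_ker, LinearMap.toSpanSingleton_apply]
  -- annihilator of any nonzero element of the image of f is p
  have hannf : ∀ z : E, z ∈ LinearMap.range f → z ≠ 0 → Ann z = p := by
    intro z hz hz0
    obtain ⟨w, rfl⟩ := hz
    obtain ⟨u, rfl⟩ := Submodule.Quotient.mk_surjective p w
    have hu : u ∉ p := by
      intro hu
      apply hz0
      rw [(Submodule.Quotient.mk_eq_zero p).2 hu, map_zero]
    have key : ∀ r : R, r • f (Submodule.Quotient.mk u) = f (Submodule.Quotient.mk (r * u)) := by
      intro r
      rw [← map_smul, ← Submodule.Quotient.mk_smul, smul_eq_mul]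
    ext r
    rw [memAnn]
    constructor
    · intro h0
      rw [key] at h0
      have h1 : (Submodule.Quotient.mk (r * u) : R ⧸ p) = 0 := by
        apply hf
        rw [h0, map_zero]
      have hmem2 : r * u ∈ p := (Submodule.Quotient.mk_eq_zero p).1 h1
      rcases hp.mem_or_mem hmem2 with hh | hh
      · exact hh
      · exact absurd hh hu
    · intro hr
      rw [key, (Submodule.Quotient.mk_eq_zero p).2 (p.mul_mem_right u hr), map_zero]
  -- essentiality, elementwise
  have hess' : ∀ y : E, y ≠ 0 → ∃ (z : E) (r : R), z = r • y ∧ z ∈ LinearMap.range f ∧ z ≠ 0 := by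
    intro y hy
    have hN : (Submodule.span R {y}) ≠ ⊥ := by
      rw [Ne, Submodule.span_singleton_eq_bot]
      exact hy
    obtain ⟨z, hz, hz0⟩ := (Submodule.ne_bot_iff _).1 (hess _ hN)
    obtain ⟨hz1, hz2⟩ := Submodule.mem_inf.1 hz
    obtain ⟨r, hr⟩ := Submodule.mem_span_singleton.1 hz2
    exact ⟨z, r, hr.symm, hz1, hz0⟩
  -- Step 1 : every element of E is p-power torsion
  have tors : ∀ x : E, ∃ n : ℕ, p ^ n ≤ Ann x := by
    by_contra hcon
    push_neg at hcon
    obtain ⟨x₀, hx₀⟩ := hcon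
    set T : Set (Ideal R) := {I | ∃ y : E, I = Ann y ∧ ∀ n : ℕ, ¬ p ^ n ≤ Ann y} with hTdef
    have hTne : T.Nonempty := ⟨Ann x₀, x₀, rfl, hx₀⟩
    obtain ⟨q, hqT, hqmax⟩ := set_has_maximal_iff_noetherian.mpr inferInstance T hTne
    obtain ⟨y, hyq, hytors⟩ := hqT
    have hy0 : y ≠ 0 := by
      intro h0
      apply hytors 1
      rw [h0]
      intro r _
      rw [memAnn, smul_zero]
    have hq_prime : Ideal.IsPrime q := by
      refine ⟨?_, ?_⟩
      · intro htop
        apply hytors 1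
        rw [← hyq, htop]
        exact le_top
      · intro a b hab
        by_contra hcon2
        push_neg at hcon2
        obtain ⟨ha, hb⟩ := hcon2
        by_cases htb : ∃ n, p ^ n ≤ Ann (b • y)
        · obtain ⟨n, hn⟩ := htb
          by_cases hall : ∀ r ∈ p ^ n, ∃ m, p ^ m ≤ Ann (r • y)
          · -- then y would be torsion
            obtain ⟨s, hs⟩ := IsNoetherian.noetherian (p ^ n)
            set F : R → ℕ := fun r => if h : ∃ m, p ^ m ≤ Ann (r • y) then h.choose else 0 with hFdef
            have hF : ∀ r ∈ p ^ n, p ^ (F r) ≤ Ann (r • y) := by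
              intro r hr
              have hh := hall r hr
              rw [hFdef]
              simp only [dif_pos hh]
              exact hh.choose_spec
            apply hytors (s.sup F + n)
            rw [pow_add]
            refine Ideal.mul_le.mpr ?_
            intro c hc d hd
            have hgen : Submodule.span R (↑s : Set R) ≤
                LinearMap.ker ((LinearMap.lsmul R E c) ∘ₗ LinearMap.toSpanSingleton R E y) := by
              rw [Submodule.span_le]
              intro g hg
              simp only [SetLike.mem_coe, LinearMap.mem_ker, LinearMap.comp_apply,
                LinearMap.toSpanSingleton_apply, LinearMap.lsmul_apply]
              have hgs : g ∈ p ^ n := by rw [← hs]; exact Submodule.subset_span hg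
              have h1 : p ^ (s.sup F) ≤ p ^ (F g) := Ideal.pow_le_pow_right (Finset.le_sup hg)
              have h2 := hF g hgs (h1 hc)
              rw [memAnn] at h2
              exact h2
            have hd' : d ∈ Submodule.span R (↑s : Set R) := by rw [hs]; exact hd
            have h3 := hgen hd'
            simp only [LinearMap.mem_ker, LinearMap.comp_apply,
              LinearMap.toSpanSingleton_apply, LinearMap.lsmul_apply] at h3
            rw [memAnn, mul_smul]
            exact h3
          · push_neg at hall
            obtain ⟨r, hr, hrt⟩ := hall
            have hsub : q ≤ Ann (r • y) := by
              intro s' hs'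
              rw [memAnn, smul_comm]
              have : s' • y = 0 := by
                rw [← memAnn, ← hyq]
                exact hs'
              rw [this, smul_zero]
            have heq : Ann (r • y) = q := by
              by_contra hne
              exact hqmax _ ⟨r • y, rfl, hrt⟩ (lt_of_le_of_ne hsub (Ne.symm hne))
            apply hb
            rw [← heq, memAnn, smul_comm]
            have : r • (b • y) = 0 := by
              rw [← memAnn]
              exact hn hr
            exact this
        · push_neg at htb
          have hsub : q ≤ Ann (b • y) := by
            intro s' hs'
            rw [memAnn, smul_comm]
            have : s' • y = 0 := by
              rw [← memAnn, ← hyq]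
              exact hs'
            rw [this, smul_zero]
          have heq : Ann (b • y) = q := by
            by_contra hne
            exact hqmax _ ⟨b • y, rfl, htb⟩ (lt_of_le_of_ne hsub (Ne.symm hne))
          apply ha
          rw [← heq, memAnn, smul_comm, ← mul_smul, mul_comm]
          have : a * b ∈ Ann y := by rw [← hyq]; exact hab
          rw [memAnn] at this
          rw [this]
    obtain ⟨z, r, hzr, hzf, hz0⟩ := hess' y hy0
    have h1 : Ann z = p := hannf z hzf hz0
    have hrq : r ∉ q := by
      intro hr
      apply hz0
      rw [hzr, ← memAnn, ← hyq]
      exact hr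
    have h2 : Ann z = q := by
      apply le_antisymm
      · intro s' hs'
        rw [memAnn, hzr, ← mul_smul] at hs'
        have : s' * r ∈ q := by rw [hyq, memAnn]; exact hs'
        rcases hq_prime.mem_or_mem this with hh | hh
        · exact hh
        · exact absurd hh hrq
      · intro s' hs'
        rw [memAnn, hzr, smul_comm]
        have : s' • y = 0 := by rw [← memAnn, ← hyq]; exact hs'
        rw [this, smul_zero]
    apply hytors 1
    rw [pow_one, ← hyq, ← h2, h1]
  -- Step 2 : a power of p kills L
  have hLFG : L.FG := Module.Finite.iff_fg.mp hLfg
  obtain ⟨s, hs⟩ := hLFG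
  set F : E → ℕ := fun x => (tors x).choose with hFdef
  have hF : ∀ x : E, p ^ (F x) ≤ Ann x := fun x => (tors x).choose_spec
  set t := s.sup F with htdef
  have hkillL : ∀ x ∈ L, ∀ r ∈ p ^ t, r • x = 0 := by
    intro x hx r hr
    have hgen : Submodule.span R (↑s : Set E) ≤ LinearMap.ker ((LinearMap.lsmul R E) r) := by
      rw [Submodule.span_le]
      intro g hg
      simp only [SetLike.mem_coe, LinearMap.mem_ker, LinearMap.lsmul_apply]
      have h1 : p ^ t ≤ p ^ (F g) := Ideal.pow_le_pow_right (Finset.le_sup hg)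
      have h2 := hF g (h1 hr)
      rw [memAnn] at h2
      exact h2
    have hx' : x ∈ Submodule.span R (↑s : Set E) := by rw [hs]; exact hx
    have h3 := hgen hx'
    simpa only [LinearMap.mem_ker, LinearMap.lsmul_apply] using h3
  -- Step 3 : R ⧸ p ∈ S
  have hRp : ModuleCat.of R (R ⧸ p) ∈ S := by
    rcases h with hpos | ⟨_, hrp⟩
    · -- positive height case
      have smul_inj : ∀ s' : R, s' ∉ p → ∀ x : E, s' • x = 0 → x = 0 := by
        intro s' hsp x hsx
        by_contra hx0
        obtain ⟨z, r, hzr, hzf, hz0⟩ := hess' x hx0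
        have hmem : s' ∈ Ann z := by
          rw [memAnn, hzr, smul_comm, hsx, smul_zero]
        rw [hannf z hzf hz0] at hmem
        exact hsp hmem
      have hnmin : ¬ IsMin (⟨p, hp⟩ : PrimeSpectrum R) := by
        intro hmin
        exact hpos.ne' (Order.height_eq_zero.mpr hmin)
      obtain ⟨qP, hqP⟩ := not_isMin_iff.mp hnmin
      have hqPlt : qP.asIdeal < p := (PrimeSpectrum.asIdeal_lt_asIdeal qP ⟨p, hp⟩).mpr hqP
      obtain ⟨a, hap, haq⟩ := SetLike.exists_of_lt hqPlt
      -- the saturation L' of L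
      have addp : ∀ (x y : E), (∃ s' : R, s' ∉ p ∧ s' • x ∈ L) →
          (∃ s' : R, s' ∉ p ∧ s' • y ∈ L) → (∃ s' : R, s' ∉ p ∧ s' • (x + y) ∈ L) := by
        intro x y hx hy
        obtain ⟨sx, hsx, hxL⟩ := hx
        obtain ⟨sy, hsy, hyL⟩ := hy
        refine ⟨sx * sy, fun hm => (hp.mem_or_mem hm).elim hsx hsy, ?_⟩
        rw [smul_add]
        exact L.add_mem (by rw [mul_comm, mul_smul]; exact L.smul_mem sy hxL)
          (by rw [mul_smul]; exact L.smul_mem sx hyL)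
      have smulp : ∀ (c : R) (x : E), (∃ s' : R, s' ∉ p ∧ s' • x ∈ L) →
          (∃ s' : R, s' ∉ p ∧ s' • (c • x) ∈ L) := by
        intro c x hx
        obtain ⟨s', hs', hxL⟩ := hx
        exact ⟨s', hs', by rw [smul_comm]; exact L.smul_mem c hxL⟩
      set L' : Submodule R E :=
        { carrier := {x | ∃ s' : R, s' ∉ p ∧ s' • x ∈ L}
          zero_mem' := ⟨1, hone, by rw [smul_zero]; exact L.zero_mem⟩
          add_mem' := fun {x y} hx hy => addp x y hx hy
          smul_mem' := fun c x hx => smulp c x hx } with hL'def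
      have hL'mem : ∀ x : E, x ∈ L' ↔ ∃ s' : R, s' ∉ p ∧ s' • x ∈ L := fun x => Iff.rfl
      have hLL' : L ≤ L' := fun x hx => ⟨1, hone, by rw [one_smul]; exact hx⟩
      have hkillL' : ∀ x ∈ L', ∀ r ∈ p ^ t, r • x = 0 := by
        intro x hx r hr
        obtain ⟨s', hsp, hsx⟩ := (hL'mem x).1 hx
        apply smul_inj s' hsp
        rw [smul_comm]
        exact hkillL _ hsx r hr
      -- L' is not all of E
      have hex : ∃ x : E, x ∉ L' := by
        by_contra hall
        push_neg at hall
        have hkE : ∀ (x : E) (r : R), r ∈ p ^ t → r • x = 0 :=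
          fun x r hr => hkillL' x (hall x) r hr
        have hBaer : Module.Baer R E := Module.Baer.of_injective hE
        set m : R →ₗ[R] R := LinearMap.toSpanSingleton R R (a ^ t) with hmdef
        have hkerm : LinearMap.ker m ≤ p := by
          intro c hc
          have hc0 : c * a ^ t = 0 := by
            have := hc
            rw [hmdef, LinearMap.mem_ker, LinearMap.toSpanSingleton_apply, smul_eq_mul] at this
            exact this
          have hmem0 : c * a ^ t ∈ qP.asIdeal := by rw [hc0]; exact zero_mem _
          have hcq : c ∈ qP.asIdeal := by
            rcases qP.isPrime.mem_or_mem hmem0 with hh | hh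
            · exact hh
            · exact absurd (qP.isPrime.mem_of_pow_mem t hh) haq
          exact hqPlt.le hcq
        set x₀ := f (Submodule.Quotient.mk 1) with hx₀def
        have hx₀0 : x₀ ≠ 0 := by
          intro h0
          have h1 : (Submodule.Quotient.mk (1 : R) : R ⧸ p) = 0 := by
            apply hf
            rw [map_zero]
            exact h0
          exact hone ((Submodule.Quotient.mk_eq_zero p).1 h1)
        set σ : R →ₗ[R] E := LinearMap.toSpanSingleton R E x₀ with hσdef
        have hkerσ : LinearMap.ker m ≤ LinearMap.ker σ := by
          intro c hc
          have hcp : c ∈ p := hkerm hc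
          rw [hσdef, LinearMap.mem_ker, LinearMap.toSpanSingleton_apply]
          rw [← memAnn, hannf x₀ (LinearMap.mem_range_self f _) hx₀0]
          exact hcp
        set g0 : (R ⧸ LinearMap.ker m) →ₗ[R] E := Submodule.liftQ _ σ hkerσ with hg0def
        set e := m.quotKerEquivRange with hedef
        have hIr : Ideal.span {a ^ t} ≤ LinearMap.range m :=
          le_of_eq (LinearMap.span_singleton_eq_range R R (a ^ t))
        set g : ↥(Ideal.span {a ^ t}) →ₗ[R] E :=
          g0 ∘ₗ (e.symm.toLinearMap ∘ₗ Submodule.inclusion hIr) with hgdef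
        obtain ⟨h', hh'⟩ := hBaer (Ideal.span {a ^ t}) g
        have hmemI : a ^ t ∈ Ideal.span {a ^ t} := Ideal.subset_span rfl
        have hval : h' (a ^ t) = x₀ := by
          rw [hh' _ hmemI, hgdef]
          have he : e.symm (Submodule.inclusion hIr ⟨a ^ t, hmemI⟩) =
              Submodule.Quotient.mk 1 := by
            apply e.injective
            rw [LinearEquiv.apply_symm_apply]
            apply Subtype.ext
            rw [hedef]
            rw [LinearMap.quotKerEquivRange_apply_mk]
            show a ^ t = m 1
            rw [hmdef, LinearMap.toSpanSingleton_apply, one_smul]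
          show g0 (e.symm (Submodule.inclusion hIr ⟨a ^ t, hmemI⟩)) = x₀
          rw [he, hg0def, Submodule.liftQ_apply, hσdef, LinearMap.toSpanSingleton_apply,
            one_smul]
        have hzero : h' (a ^ t) = 0 := by
          have hpt : a ^ t ∈ p ^ t := Ideal.pow_mem_pow hap t
          have h1 : h' (a ^ t) = a ^ t • h' 1 := by
            rw [← map_smul, smul_eq_mul, mul_one]
          rw [h1]
          exact hkE _ _ hpt
        exact hx₀0 (by rw [← hval, hzero])
      obtain ⟨x, hxL'⟩ := hex
      -- minimal n with p^n • x ⊆ L'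
      have hPex : ∃ n : ℕ, ∀ r ∈ p ^ n, r • x ∈ L' := by
        obtain ⟨n, hn⟩ := tors x
        refine ⟨n, fun r hr => ?_⟩
        have : r • x = 0 := by rw [← memAnn]; exact hn hr
        rw [this]
        exact L'.zero_mem
      have hn0 : Nat.find hPex ≠ 0 := by
        intro h0
        apply hxL'
        have h1 := Nat.find_spec hPex 1 (by rw [h0, pow_zero, Ideal.one_eq_top]; trivial)
        rw [one_smul] at h1
        exact h1
      have hfind : Nat.find hPex = (Nat.find hPex - 1) + 1 := by omega
      have hnotall : ¬ ∀ r ∈ p ^ (Nat.find hPex - 1), r • x ∈ L' :=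
        Nat.find_min hPex (by omega)
      push_neg at hnotall
      obtain ⟨r, hrp', hry⟩ := hnotall
      set y := r • x with hydef
      have hpy : ∀ s' ∈ p, s' • y ∈ L' := by
        intro s' hs'
        have hmul : s' * r ∈ p ^ Nat.find hPex := by
          rw [hfind, pow_succ']
          exact Ideal.mul_mem_mul hs' hrp'
        have h2 := Nat.find_spec hPex (s' * r) hmul
        rw [mul_smul] at h2
        exact h2
      -- build injection R ⧸ p → E ⧸ L'
      set ybar : E ⧸ L' := Submodule.Quotient.mk y with hybardef
      set σ' : R →ₗ[R] E ⧸ L' := LinearMap.toSpanSingleton R (E ⧸ L') ybar with hσ'def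
      have hpker : p ≤ LinearMap.ker σ' := by
        intro s' hs'
        rw [hσ'def, LinearMap.mem_ker, LinearMap.toSpanSingleton_apply, hybardef,
          ← Submodule.Quotient.mk_smul, Submodule.Quotient.mk_eq_zero]
        exact hpy s' hs'
      have hkerp : LinearMap.ker σ' ≤ p := by
        intro s' hs'
        rw [hσ'def, LinearMap.mem_ker, LinearMap.toSpanSingleton_apply, hybardef,
          ← Submodule.Quotient.mk_smul, Submodule.Quotient.mk_eq_zero] at hs'
        by_contra hsp
        obtain ⟨s'', hs'', hss⟩ := (hL'mem _).1 hs'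
        refine hry ((hL'mem _).1 ?_)
        refine (hL'mem y).2 ⟨s'' * s', fun hm => (hp.mem_or_mem hm).elim hs'' hsp, ?_⟩
        rw [mul_smul]
        exact hss
      set φ : (R ⧸ p) →ₗ[R] (E ⧸ L') := Submodule.liftQ p σ' hpker with hφdef
      have hφinj : Function.Injective φ := by
        rw [← LinearMap.ker_eq_bot, hφdef]
        exact Submodule.ker_liftQ_eq_bot p σ' hpker hkerp
      have hEL' : ModuleCat.of R (E ⧸ L') ∈ S := by
        have h1 := hS.quot (ModuleCat.of R (E ⧸ L)) (L'.map L.mkQ) hLq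
        exact hS.isoClosed _ _ (Submodule.quotientQuotientEquivQuotient L L' hLL') h1
      exact memS_of_inj hS hEL' φ hφinj
    · exact hrp
  -- Step 4 : L ∈ S
  have hL : ModuleCat.of R ↥L ∈ S := by
    refine ptkilled_mem hS p hRp t ↥L hLfg ?_
    intro x r hr
    exact Subtype.ext (by
      rw [SetLike.val_smul, ZeroMemClass.coe_zero]
      exact hkillL ↑x x.2 r hr)
  exact hS.ext (ModuleCat.of R E) L hL hLq
end
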